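/- Let p be a prime and θ, σ ∈ ℤ_p with θ ≠ σ. Then: (i) for every nonzero integer t there exist infinitely many n ∈ ℕ such that (n:ℤ_p) ≠ θ, (n:ℤ_p) ≠ σ, and ν_p(n − θ) = ν_p(n − σ) + t; (ii) for every integer δ ≥ 1 and every x ∈ {1, …, p^δ − 1} with p ∤ x and x (as a residue mod p^δ) different from ℓ_{p,δ}(θ − σ), there exist infinitely many n ∈ ℕ such that ℓ_{p,δ}(n − θ) = x and ℓ_{p,δ}(n − σ) = ℓ_{p,δ}(θ − σ). -/

import Mathlib

/-- The `k`-kernel of a sequence: the set of subsequences `n ↦ a (k^i·n + j)`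
for `i ≥ 0` and `0 ≤ j ≤ k^i - 1`. -/
def kKernel {R : Type*} (k : ℕ) (a : ℕ → R) : Set (ℕ → R) :=
  {c | ∃ i j : ℕ, j < k ^ i ∧ c = fun n => a (k ^ i * n + j)}

/-- A sequence is `k`-automatic if its `k`-kernel is a finite set. -/
def IsKAutomatic {R : Type*} (k : ℕ) (a : ℕ → R) : Prop :=
  (kKernel k a).Finite

/-- A sequence with values in a `ℤ`-module is `k`-regular if the `ℤ`-submodule
of the module of all sequences generated by its `k`-kernel is finitely generated. -/
def IsKRegular {R : Type*} [AddCommGroup R] (k : ℕ) (a : ℕ → R) : Prop :=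
  (Submodule.span ℤ (kKernel k a)).FG

/-- `k` and `m` are multiplicatively independent if `k^a = m^b` forces `a = b = 0`. -/
def MultiplicativelyIndependent (k m : ℕ) : Prop :=
  ∀ a b : ℕ, k ^ a = m ^ b → a = 0 ∧ b = 0

/-- Strictly `k`-regular: `k`-regular but not `m`-regular for every `m ≥ 2`
multiplicatively independent of `k`. -/
def StrictlyKRegular {R : Type*} [AddCommGroup R] (k : ℕ) (a : ℕ → R) : Prop :=
  IsKRegular k a ∧ ∀ m : ℕ, 2 ≤ m → MultiplicativelyIndependent k m → ¬ IsKRegular m a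

/-- Strictly `k`-automatic: `k`-automatic but not `m`-automatic for every `m ≥ 2`
multiplicatively independent of `k`. -/
def StrictlyKAutomatic {R : Type*} (k : ℕ) (a : ℕ → R) : Prop :=
  IsKAutomatic k a ∧ ∀ m : ℕ, 2 ≤ m → MultiplicativelyIndependent k m → ¬ IsKAutomatic m a

/-- `f : ℤ_p → ℚ_p` is analytic if it is given by a power series converging
(to `f x`) at every point `x ∈ ℤ_p`. -/
def IsPadicAnalytic {p : ℕ} [Fact p.Prime] (f : ℤ_[p] → ℚ_[p]) : Prop :=
  ∃ c : ℕ → ℚ_[p], ∀ x : ℤ_[p], HasSum (fun i => c i * (x : ℚ_[p]) ^ i) (f x)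

/-- The set of roots of `f` in `ℤ_p`. -/
def padicRootSet {p : ℕ} [Fact p.Prime] (f : ℤ_[p] → ℚ_[p]) : Set ℤ_[p] :=
  {θ | f θ = 0}

/-- A `p`-adic integer is rational if it is the image of a rational number. -/
def IsRationalPadicInt {p : ℕ} [Fact p.Prime] (θ : ℤ_[p]) : Prop :=
  ∃ q : ℚ, (θ : ℚ_[p]) = (q : ℚ_[p])

/-- `θ` is a root of `f` of multiplicity `m`:
`f x = (x - θ)^m · g x` with `g` analytic and `g θ ≠ 0`. -/
def HasRootMultiplicity {p : ℕ} [Fact p.Prime] (f : ℤ_[p] → ℚ_[p]) (θ : ℤ_[p]) (m : ℕ) : Prop :=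
  ∃ g : ℤ_[p] → ℚ_[p], IsPadicAnalytic g ∧ g θ ≠ 0 ∧
    ∀ x : ℤ_[p], f x = ((x : ℚ_[p]) - (θ : ℚ_[p])) ^ m * g x

/-- `ν_{p^l}(x) = ⌊ν_p(x)/l⌋` (with junk value `0` at `x = 0`). -/
noncomputable def nuPow (p : ℕ) [Fact p.Prime] (l : ℕ) (x : ℚ_[p]) : ℤ :=
  x.valuation / (l : ℤ)

open Classical in
/-- `ℒ_{p^l}(x) = p^{-l·ν_{p^l}(x)}·x ∈ ℤ_p`, with `ℒ_{p^l}(0) = 0`. -/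
noncomputable def padicL (p : ℕ) [hp : Fact p.Prime] (l : ℕ) (x : ℚ_[p]) : ℤ_[p] :=
  if h : x = 0 ∨ l = 0 then 0
  else ⟨(p : ℚ_[p]) ^ (-((l : ℤ) * nuPow p l x)) * x, by
    push_neg at h
    obtain ⟨hx, hl⟩ := h
    have hp0 : (p : ℚ_[p]) ≠ 0 := Nat.cast_ne_zero.mpr hp.out.ne_zero
    have hz : (p : ℚ_[p]) ^ (-((l : ℤ) * nuPow p l x)) ≠ 0 := zpow_ne_zero _ hp0
    rw [Padic.norm_le_one_iff_val_nonneg, Padic.valuation_mul hz hx]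
    have hvz : ((p : ℚ_[p]) ^ (-((l : ℤ) * nuPow p l x))).valuation
        = -((l : ℤ) * nuPow p l x) := by
      have h1 : ‖(p : ℚ_[p]) ^ (-((l : ℤ) * nuPow p l x))‖
          = (p : ℝ) ^ (-(-((l : ℤ) * nuPow p l x))) := Padic.norm_p_zpow _
      rw [Padic.norm_eq_zpow_neg_valuation hz] at h1
      have h1p : 1 < (p : ℝ) := by exact_mod_cast hp.out.one_lt
      have := (zpow_right_strictMono₀ h1p).injective h1
      omega
    rw [hvz, nuPow]
    have hl' : (0 : ℤ) < (l : ℤ) := by exact_mod_cast Nat.pos_of_ne_zero hl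
    have := Int.emod_nonneg x.valuation (by exact_mod_cast hl : (l : ℤ) ≠ 0)
    have heq := Int.emod_add_mul_ediv x.valuation (l : ℤ)
    omega⟩

/-- `ℓ_{p^l,d}(x) = ℒ_{p^l}(x) mod p^{ld} ∈ ℤ/p^{ld}ℤ`. -/
noncomputable def padicEll (p : ℕ) [Fact p.Prime] (l d : ℕ) (x : ℚ_[p]) : ZMod (p ^ (l * d)) :=
  PadicInt.toZModPow (l * d) (padicL p l x)

/-- A sequence is eventually periodic. -/
def EventuallyPeriodic {R : Type*} (a : ℕ → R) : Prop :=
  ∃ T : ℕ, 1 ≤ T ∧ ∃ N : ℕ, ∀ n : ℕ, N ≤ n → a (n + T) = a n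

section helpers
variable {p : ℕ} [hp : Fact p.Prime]

lemma my_val_pow_mul_unit (v : ℕ) (u : ℤ_[p]) (hu : ‖u‖ = 1) :
    ((p : ℤ_[p]) ^ v * u).valuation = v := by
  have hu0 : u ≠ 0 := by intro h; rw [h, norm_zero] at hu; norm_num at hu
  have huv : u.valuation = 0 := by
    have h := PadicInt.norm_eq_zpow_neg_valuation hu0
    rw [hu] at h
    have h1p : 1 < (p : ℝ) := mod_cast hp.out.one_lt
    have h2 : (p : ℝ) ^ (0 : ℤ) = (p : ℝ) ^ (-(u.valuation : ℤ)) := by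
      rw [zpow_zero]; exact h
    have := (zpow_right_strictMono₀ h1p).injective h2
    omega
  rw [PadicInt.valuation_p_pow_mul _ _ hu0, huv, add_zero]

lemma my_approx (k : ℕ) (a : ℤ_[p]) (m : ℕ) :
    ∃ w : ℤ_[p], (((PadicInt.toZModPow k a).val + m * p ^ k : ℕ) : ℤ_[p])
      = a + (p : ℤ_[p]) ^ k * w := by
  haveI : NeZero (p ^ k) := ⟨pow_ne_zero _ hp.out.ne_zero⟩
  have hker : PadicInt.toZModPow k
      ((((PadicInt.toZModPow k a).val + m * p ^ k : ℕ) : ℤ_[p]) - a) = 0 := by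
    rw [map_sub, map_natCast]
    push_cast
    rw [← Nat.cast_pow, ZMod.natCast_self]
    ring_nf
    rw [sub_eq_zero]
    exact ZMod.natCast_rightInverse _
  have hmem : (((PadicInt.toZModPow k a).val + m * p ^ k : ℕ) : ℤ_[p]) - a
      ∈ Ideal.span {(p : ℤ_[p]) ^ k} := by
    rw [← PadicInt.ker_toZModPow]; exact hker
  rw [Ideal.mem_span_singleton] at hmem
  obtain ⟨w, hw⟩ := hmem
  exact ⟨w, by rw [← hw]; ring⟩

lemma my_ell (δ v : ℕ) (u : ℤ_[p]) (hu : ‖u‖ = 1) :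
    padicEll p 1 δ (((p : ℤ_[p]) ^ v * u : ℤ_[p]) : ℚ_[p])
      = PadicInt.toZModPow (1 * δ) u := by
  have hp0 : (p : ℤ_[p]) ≠ 0 := Nat.cast_ne_zero.mpr hp.out.ne_zero
  have hp0' : (p : ℚ_[p]) ≠ 0 := Nat.cast_ne_zero.mpr hp.out.ne_zero
  have hu0 : u ≠ 0 := by intro h; rw [h, norm_zero] at hu; norm_num at hu
  have hy : ((p : ℤ_[p]) ^ v * u) ≠ 0 := mul_ne_zero (pow_ne_zero _ hp0) hu0
  have hx : (((p : ℤ_[p]) ^ v * u : ℤ_[p]) : ℚ_[p]) ≠ 0 := by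
    exact fun h => hy (Subtype.coe_injective h)
  have hval : nuPow p 1 (((p : ℤ_[p]) ^ v * u : ℤ_[p]) : ℚ_[p]) = v := by
    unfold nuPow
    rw [Nat.cast_one, Int.ediv_one]
    exact (PadicInt.valuation_coe _).trans (by exact_mod_cast my_val_pow_mul_unit v u hu)
  unfold padicEll
  congr 1
  rw [padicL]
  erw [dif_neg (not_or.mpr ⟨hx, one_ne_zero⟩)]
  apply Subtype.ext
  show (p : ℚ_[p]) ^ (-((1 : ℤ) * nuPow p 1 _)) * _ = (u : ℚ_[p])
  rw [hval, one_mul, zpow_neg, zpow_natCast]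
  push_cast
  rw [inv_mul_cancel_left₀ (pow_ne_zero _ hp0')]

end helpers

section helpers2
variable {p : ℕ} [hp : Fact p.Prime]

lemma my_norm_p_lt_one : ‖(p : ℤ_[p])‖ < 1 := by
  rw [PadicInt.norm_p]
  rw [inv_lt_one_iff₀]
  right
  exact_mod_cast hp.out.one_lt

lemma my_norm_lt (d : ℕ) (hd : 1 ≤ d) (z : ℤ_[p]) : ‖(p : ℤ_[p]) ^ d * z‖ < 1 := by
  obtain ⟨d', rfl⟩ : ∃ d', d = d' + 1 := ⟨d - 1, by omega⟩
  have h : ‖(p : ℤ_[p]) * z‖ < 1 := by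
    rw [mul_comm]; exact PadicInt.norm_lt_one_mul my_norm_p_lt_one
  rw [pow_succ, mul_assoc]
  exact PadicInt.norm_lt_one_mul h

lemma my_norm_unit_add (u z : ℤ_[p]) (hu : ‖u‖ = 1) (hz : ‖z‖ < 1) : ‖u + z‖ = 1 := by
  rw [PadicInt.norm_add_eq_max_of_ne (by rw [hu]; exact hz.ne'), hu, max_eq_left hz.le]

lemma my_ne_zero_of_norm_one (u : ℤ_[p]) (hu : ‖u‖ = 1) : u ≠ 0 := by
  intro h; rw [h, norm_zero] at hu; norm_num at hu

lemma my_inj (k : ℕ) (c : ℕ) :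
    Function.Injective (fun m : ℕ => c + m * p ^ k) := by
  have hpk : 0 < p ^ k := pow_pos hp.out.pos k
  intro m1 m2 h
  simp only [add_right_inj] at h
  exact Nat.eq_of_mul_eq_mul_right hpk h

lemma my_aux1 (θ σ : ℤ_[p]) (hθσ : θ ≠ σ) (T : ℕ) (hT : 1 ≤ T) :
    {n : ℕ | (n : ℤ_[p]) ≠ θ ∧ (n : ℤ_[p]) ≠ σ ∧
      ((n : ℤ_[p]) - θ).valuation = ((n : ℤ_[p]) - σ).valuation + T}.Infinite := by
  have hp0 : (p : ℤ_[p]) ≠ 0 := Nat.cast_ne_zero.mpr hp.out.ne_zero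
  have hne : θ - σ ≠ 0 := sub_ne_zero.mpr hθσ
  have hspec : θ - σ = (PadicInt.unitCoeff hne : ℤ_[p]) * (p : ℤ_[p]) ^ (θ - σ).valuation :=
    PadicInt.unitCoeff_spec hne
  set u₀ : ℤ_[p] := (PadicInt.unitCoeff hne : ℤ_[p]) with hu₀def
  set e := (θ - σ).valuation with hedef
  set a := θ + (p : ℤ_[p]) ^ (e + T) with ha
  set k := e + T + 1 with hk
  apply Set.infinite_of_injective_forall_mem
    (f := fun m : ℕ => (PadicInt.toZModPow k a).val + m * p ^ k) (my_inj k _)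
  intro m
  simp only [Set.mem_setOf_eq]
  obtain ⟨w, hw⟩ := my_approx k a m
  have hwn : ‖(1 : ℤ_[p]) + p * w‖ = 1 := by
    refine my_norm_unit_add 1 ((p : ℤ_[p]) * w) norm_one ?_
    rw [mul_comm]; exact PadicInt.norm_lt_one_mul my_norm_p_lt_one
  have hθn : ((((PadicInt.toZModPow k a).val + m * p ^ k : ℕ)) : ℤ_[p]) - θ
      = (p : ℤ_[p]) ^ (e + T) * (1 + p * w) := by
    rw [hw, ha, hk, pow_succ]
    ring
  have hσn : ((((PadicInt.toZModPow k a).val + m * p ^ k : ℕ)) : ℤ_[p]) - σ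
      = (p : ℤ_[p]) ^ e * (u₀ + p ^ T * (1 + p * w)) := by
    have h0 : ((((PadicInt.toZModPow k a).val + m * p ^ k : ℕ)) : ℤ_[p]) - σ
        = (((((PadicInt.toZModPow k a).val + m * p ^ k : ℕ)) : ℤ_[p]) - θ) + (θ - σ) := by ring
    rw [h0, hθn, hspec, pow_add]
    ring
  have hu1 : ‖u₀ + (p : ℤ_[p]) ^ T * (1 + p * w)‖ = 1 := by
    refine my_norm_unit_add _ _ ?_ (my_norm_lt T hT _)
    rw [hu₀def]; exact PadicInt.norm_units _
  refine ⟨?_, ?_, ?_⟩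
  · rw [← sub_ne_zero, hθn]
    exact mul_ne_zero (pow_ne_zero _ hp0) (my_ne_zero_of_norm_one _ hwn)
  · rw [← sub_ne_zero, hσn]
    exact mul_ne_zero (pow_ne_zero _ hp0) (my_ne_zero_of_norm_one _ hu1)
  · rw [hθn, hσn, my_val_pow_mul_unit (e + T) _ hwn, my_val_pow_mul_unit e _ hu1]


/-- Given distinct `θ, σ ∈ ℤ_p`: (i) for every nonzero `t ∈ ℤ` there
are infinitely many `n` with `ν_p(n-θ) = ν_p(n-σ) + t`; (ii) for suitable `x` there are
infinitely many `n` with `ℓ_{p,δ}(n-θ) = x` and `ℓ_{p,δ}(n-σ) = ℓ_{p,δ}(θ-σ)`. -/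
theorem statement14 (p : ℕ) [Fact p.Prime] (θ σ : ℤ_[p]) (hθσ : θ ≠ σ) :
    (∀ t : ℤ, t ≠ 0 →
      {n : ℕ | (n : ℤ_[p]) ≠ θ ∧ (n : ℤ_[p]) ≠ σ ∧
        ((n : ℤ_[p]) - θ).valuation = ((n : ℤ_[p]) - σ).valuation + t}.Infinite) ∧
    (∀ δ : ℕ, 1 ≤ δ → ∀ x : ℕ, 1 ≤ x → x ≤ p ^ δ - 1 → ¬ p ∣ x →
      (x : ZMod (p ^ (1 * δ))) ≠ padicEll p 1 δ ((θ - σ : ℤ_[p]) : ℚ_[p]) →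
      {n : ℕ | padicEll p 1 δ ((((n : ℤ_[p]) - θ : ℤ_[p]) : ℚ_[p]))
          = (x : ZMod (p ^ (1 * δ))) ∧
        padicEll p 1 δ ((((n : ℤ_[p]) - σ : ℤ_[p]) : ℚ_[p]))
          = padicEll p 1 δ ((θ - σ : ℤ_[p]) : ℚ_[p])}.Infinite) := by
  have hp0 : (p : ℤ_[p]) ≠ 0 := Nat.cast_ne_zero.mpr ‹Fact p.Prime›.out.ne_zero
  constructor
  · intro t ht
    rcases lt_or_gt_of_ne ht with hneg | hpos
    · have h := my_aux1 σ θ (Ne.symm hθσ) (-t).toNat (by omega)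
      apply h.mono
      intro n hn
      obtain ⟨h1, h2, h3⟩ := hn
      refine ⟨h2, h1, ?_⟩
      have h4 : (((-t).toNat : ℕ) : ℤ) = -t := Int.toNat_of_nonneg (by omega)
      omega
    · have h := my_aux1 θ σ hθσ t.toNat (by omega)
      apply h.mono
      intro n hn
      obtain ⟨h1, h2, h3⟩ := hn
      refine ⟨h1, h2, ?_⟩
      have h4 : ((t.toNat : ℕ) : ℤ) = t := Int.toNat_of_nonneg (by omega)
      omega
  · intro δ hδ x hx1 hx2 hxp _
    have hne : θ - σ ≠ 0 := sub_ne_zero.mpr hθσ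
    have hspec : θ - σ = (PadicInt.unitCoeff hne : ℤ_[p]) * (p : ℤ_[p]) ^ (θ - σ).valuation :=
      PadicInt.unitCoeff_spec hne
    set u₀ : ℤ_[p] := (PadicInt.unitCoeff hne : ℤ_[p]) with hu₀def
    set e := (θ - σ).valuation with hedef
    set a := θ + (p : ℤ_[p]) ^ (e + δ) * (x : ℤ_[p]) with ha
    set k := e + δ + δ with hk
    have hxnorm : ‖(x : ℤ_[p])‖ = 1 := by
      have hd : ¬ ((p : ℤ) ∣ (x : ℤ)) := by exact_mod_cast hxp
      have h2 : ¬ ‖((x : ℤ) : ℤ_[p])‖ < 1 := fun hh =>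
        hd ((PadicInt.norm_int_lt_one_iff_dvd _).mp hh)
      have h3 : ((x : ℤ) : ℤ_[p]) = (x : ℤ_[p]) := by push_cast; ring
      rw [h3] at h2
      exact le_antisymm (PadicInt.norm_le_one _) (not_lt.mp h2)
    have hzero : ((p : ZMod (p ^ (1 * δ)))) ^ δ = 0 := by
      rw [← Nat.cast_pow, ZMod.natCast_eq_zero_iff]
      rw [one_mul]
    have hellts : padicEll p 1 δ ((θ - σ : ℤ_[p]) : ℚ_[p])
        = PadicInt.toZModPow (1 * δ) u₀ := by
      have hspec' : θ - σ = (p : ℤ_[p]) ^ e * u₀ := by rw [hspec]; ring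
      rw [hspec']
      exact my_ell δ e u₀ (PadicInt.norm_units _)
    apply Set.infinite_of_injective_forall_mem
      (f := fun m : ℕ => (PadicInt.toZModPow k a).val + m * p ^ k) (my_inj k _)
    intro m
    simp only [Set.mem_setOf_eq]
    obtain ⟨w, hw⟩ := my_approx k a m
    have hun : ‖(x : ℤ_[p]) + (p : ℤ_[p]) ^ δ * w‖ = 1 :=
      my_norm_unit_add _ _ hxnorm (my_norm_lt δ hδ _)
    have hθn : ((((PadicInt.toZModPow k a).val + m * p ^ k : ℕ)) : ℤ_[p]) - θ
        = (p : ℤ_[p]) ^ (e + δ) * ((x : ℤ_[p]) + (p : ℤ_[p]) ^ δ * w) := by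
      rw [hw, ha, hk, pow_add ((p : ℤ_[p])) (e + δ) δ]
      ring
    have hσn : ((((PadicInt.toZModPow k a).val + m * p ^ k : ℕ)) : ℤ_[p]) - σ
        = (p : ℤ_[p]) ^ e * (u₀ + (p : ℤ_[p]) ^ δ * ((x : ℤ_[p]) + (p : ℤ_[p]) ^ δ * w)) := by
      have h0 : ((((PadicInt.toZModPow k a).val + m * p ^ k : ℕ)) : ℤ_[p]) - σ
          = (((((PadicInt.toZModPow k a).val + m * p ^ k : ℕ)) : ℤ_[p]) - θ) + (θ - σ) := by ring
      rw [h0, hθn, hspec, pow_add]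
      ring
    have hu1 : ‖u₀ + (p : ℤ_[p]) ^ δ * ((x : ℤ_[p]) + (p : ℤ_[p]) ^ δ * w)‖ = 1 := by
      refine my_norm_unit_add _ _ ?_ (my_norm_lt δ hδ _)
      rw [hu₀def]; exact PadicInt.norm_units _
    constructor
    · rw [hθn, my_ell δ (e + δ) _ hun, map_add, map_natCast, map_mul, map_pow, map_natCast,
        hzero, zero_mul, add_zero]
    · rw [hσn, my_ell δ e _ hu1, hellts, map_add, map_mul, map_pow, map_natCast,
        hzero, zero_mul, add_zero]

end helpers2
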